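/- Let P be a polynomial of exact degree n ≥ 1 with real coefficients having n simple real zeros, and suppose |P(y)| ≥ 1 for every critical point y of P (i.e., every real y with P'(y) = 0). Then the inverse image P⁻¹([−1,1]) = {z ∈ ℂ : P(z) ∈ [−1,1]} is contained in the real line. -/

import Mathlib

open Polynomial

lemma aux_count (R : ℝ[X]) (hR : R ≠ 0) (n : ℕ) (u d : ℕ → ℝ)
    (hu : ∀ i j, i < j → j ≤ n → u i < u j)
    (hd0 : ∀ j, j ≤ n → d j ≠ 0)
    (halt : ∀ j, j < n → d (j+1) = - d j)
    (hsign : ∀ j, j ≤ n → 0 ≤ d j * R.eval (u j))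
    (hder : ∀ j, j ≤ n → R.eval (u j) = 0 → R.derivative.eval (u j) = 0) :
    n ≤ Multiset.card R.roots := by
  have hex : ∀ j, ∃ v, j < n → (R.eval v = 0 ∧ u j ≤ v ∧ v ≤ u (j+1)) := by
    intro j
    by_cases hj : j < n
    swap
    · exact ⟨0, fun h => absurd h hj⟩
    have hlt : u j < u (j+1) := hu j (j+1) (by omega) (by omega)
    by_cases h0 : R.eval (u j) = 0
    · exact ⟨u j, fun _ => ⟨h0, le_refl _, le_of_lt hlt⟩⟩
    by_cases h1 : R.eval (u (j+1)) = 0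
    · exact ⟨u (j+1), fun _ => ⟨h1, le_of_lt hlt, le_refl _⟩⟩
    have hj1 : 0 < d j * R.eval (u j) :=
      lt_of_le_of_ne (hsign j (by omega)) (fun h => h0 (by
        rcases mul_eq_zero.mp h.symm with h' | h'
        · exact absurd h' (hd0 j (by omega))
        · exact h'))
    have hj2 : 0 < d (j+1) * R.eval (u (j+1)) :=
      lt_of_le_of_ne (hsign (j+1) (by omega)) (fun h => h1 (by
        rcases mul_eq_zero.mp h.symm with h' | h'
        · exact absurd h' (hd0 (j+1) (by omega))
        · exact h'))
    rw [halt j hj] at hj2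
    have hneg : d j * R.eval (u (j+1)) < 0 := by nlinarith
    have hcont : ContinuousOn (fun t => d j * R.eval t) (Set.Icc (u j) (u (j+1))) :=
      (continuous_const.mul (R.continuous_aeval)).continuousOn
    have hmem : (0:ℝ) ∈ Set.Ioo (d j * R.eval (u (j+1))) (d j * R.eval (u j)) := ⟨hneg, hj1⟩
    obtain ⟨v, hv, hgv⟩ := intermediate_value_Ioo' (le_of_lt hlt) hcont hmem
    refine ⟨v, fun _ => ⟨?_, le_of_lt hv.1, le_of_lt hv.2⟩⟩
    rcases mul_eq_zero.mp hgv with h' | h'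
    · exact absurd h' (hd0 j (by omega))
    · exact h'
  choose s hs using hex
  -- properties
  have hroot : ∀ j, j < n → R.IsRoot (s j) := fun j hj => (hs j hj).1
  have hle1 : ∀ j, j < n → u j ≤ s j := fun j hj => (hs j hj).2.1
  have hle2 : ∀ j, j < n → s j ≤ u (j+1) := fun j hj => (hs j hj).2.2
  have key : ∀ j k, j ∈ Finset.range n → k ∈ Finset.range n → j < k → s j = s k →
      k = j + 1 ∧ s k = u k := by
    intro j k hj hk hjk heq
    simp only [Finset.mem_range] at hj hk
    have h1 : u k ≤ u (j+1) := by
      calc u k ≤ s k := hle1 k hk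
      _ = s j := heq.symm
      _ ≤ u (j+1) := hle2 j hj
    have hk1 : k ≤ j + 1 := by
      by_contra h
      exact absurd h1 (not_le.mpr (hu (j+1) k (by omega) (by omega)))
    have hkeq : k = j + 1 := by omega
    subst hkeq
    exact ⟨rfl, le_antisymm (heq ▸ hle2 j hj) (hle1 (j+1) hk)⟩
  -- counting
  have hcardsum := Finset.card_eq_sum_card_image s (Finset.range n)
  rw [Finset.card_range] at hcardsum
  have himg : (Finset.range n).image s ⊆ R.roots.toFinset := by
    intro v hv
    obtain ⟨j, hj, rfl⟩ := Finset.mem_image.mp hv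
    simp only [Finset.mem_range] at hj
    rw [Multiset.mem_toFinset, mem_roots hR]
    exact hroot j hj
  have hbound : ∀ v ∈ (Finset.range n).image s,
      ((Finset.range n).filter (fun j => s j = v)).card ≤ R.roots.count v := by
    intro v hv
    set G := (Finset.range n).filter (fun j => s j = v) with hG
    have hGne : G.Nonempty := by
      obtain ⟨j, hj, hjv⟩ := Finset.mem_image.mp hv
      exact ⟨j, Finset.mem_filter.mpr ⟨hj, hjv⟩⟩
    have hvroot : R.IsRoot v := by
      obtain ⟨j, hjG⟩ := hGne
      obtain ⟨hj, hjv⟩ := Finset.mem_filter.mp hjG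
      exact hjv ▸ hroot j (Finset.mem_range.mp hj)
    rw [count_roots]
    by_cases h2 : 2 ≤ G.card
    · -- two distinct indices
      obtain ⟨a, ha, b, hb, hab⟩ := Finset.one_lt_card.mp (show 1 < G.card by omega)
      -- wlog a < b
      have hmain : ∀ a b, a ∈ G → b ∈ G → a < b → 2 ≤ R.rootMultiplicity v ∧ G.card ≤ 2 := by
        intro a b ha hb hab
        obtain ⟨haR, hav⟩ := Finset.mem_filter.mp ha
        obtain ⟨hbR, hbv⟩ := Finset.mem_filter.mp hb
        obtain ⟨hba, hbu⟩ := key a b haR hbR hab (hav.trans hbv.symm)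
        have hbn : b < n := Finset.mem_range.mp hbR
        have hder' : R.derivative.eval v = 0 := by
          rw [← hbv, hbu]
          exact hder b (by omega) (by rw [← hbu, hbv]; exact hvroot)
        constructor
        · exact (one_lt_rootMultiplicity_iff_isRoot hR).mpr ⟨hvroot, hder'⟩
        · -- G ⊆ {a, b}
          have hsub : G ⊆ {a, b} := by
            intro k hk
            obtain ⟨hkR, hkv⟩ := Finset.mem_filter.mp hk
            simp only [Finset.mem_insert, Finset.mem_singleton]
            rcases lt_trichotomy k a with h | h | h
            · exfalso
              obtain ⟨hc, _⟩ := key k a hkR haR h (hkv.trans hav.symm)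
              -- k < a and a = k+1; also consider k vs b: k < b, b = k+1 = a, contra a<b
              obtain ⟨hc2, _⟩ := key k b hkR hbR (by omega) (hkv.trans hbv.symm)
              omega
            · left; exact h
            · rcases lt_trichotomy k b with h' | h' | h'
              · exfalso
                obtain ⟨hc, _⟩ := key a k haR hkR h (hav.trans hkv.symm)
                omega
              · right; exact h'
              · exfalso
                obtain ⟨hc, _⟩ := key b k hbR hkR h' (hbv.trans hkv.symm)
                obtain ⟨hc2, _⟩ := key a k haR hkR (by omega) (hav.trans hkv.symm)
                omega
          calc G.card ≤ ({a, b} : Finset ℕ).card := Finset.card_le_card hsub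
          _ ≤ 2 := Finset.card_insert_le a {b} |>.trans (by simp)
      rcases lt_trichotomy a b with h | h | h
      · obtain ⟨hm, hc⟩ := hmain a b ha hb h; omega
      · exact absurd h hab
      · obtain ⟨hm, hc⟩ := hmain b a hb ha h; omega
    · have h1 : 1 ≤ R.rootMultiplicity v := (rootMultiplicity_pos hR).mpr hvroot
      omega
  calc n = ∑ v ∈ (Finset.range n).image s, ((Finset.range n).filter (fun j => s j = v)).card :=
        hcardsum
    _ ≤ ∑ v ∈ (Finset.range n).image s, R.roots.count v := Finset.sum_le_sum hbound
    _ ≤ ∑ v ∈ R.roots.toFinset, R.roots.count v :=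
        Finset.sum_le_sum_of_subset himg
    _ = Multiset.card R.roots := R.roots.toFinset_sum_count_eq


theorem inverse_image_real (n : ℕ) (hn : 1 ≤ n) (P : ℝ[X]) (hdeg : P.natDegree = n)
    (hroots : P.roots.card = n ∧ P.roots.Nodup)
    (hcrit : ∀ y : ℝ, P.derivative.eval y = 0 → 1 ≤ |P.eval y|) :
    ∀ z : ℂ, (Polynomial.aeval z P ∈ (fun t : ℝ => (t : ℂ)) '' Set.Icc (-1 : ℝ) 1) → z.im = 0 := by
  intro z hz
  by_contra him
  obtain ⟨w, hw, hwz⟩ := hz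
  -- basic facts
  have hP0 : P ≠ 0 := fun h => by simp [h] at hdeg; omega
  set c := P.leadingCoeff with hc
  have hc0 : c ≠ 0 := leadingCoeff_ne_zero.mpr hP0
  -- roots enumeration
  have htf : P.roots.toFinset.card = n := by
    rw [Multiset.toFinset_card_eq_card_iff_nodup.mpr hroots.2, hroots.1]
  set r : Fin n → ℝ := fun i => P.roots.toFinset.orderEmbOfFin htf i with hr
  have hrmono : StrictMono r := (P.roots.toFinset.orderEmbOfFin htf).strictMono
  have hrmem : ∀ i, r i ∈ P.roots := fun i =>
    Multiset.mem_toFinset.mp (P.roots.toFinset.orderEmbOfFin_mem htf i)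
  have hrroot : ∀ i, P.eval (r i) = 0 := fun i => (mem_roots hP0).mp (hrmem i)
  set ρ : ℕ → ℝ := fun i => if h : i < n then r ⟨i, h⟩ else 0 with hρ
  have hρroot : ∀ i, i < n → P.eval (ρ i) = 0 := by
    intro i hi; simp only [hρ, dif_pos hi]; exact hrroot _
  have hρmono : ∀ i j, i < j → j < n → ρ i < ρ j := by
    intro i j hij hj
    simp only [hρ, dif_pos hj, dif_pos (lt_trans hij hj)]
    exact hrmono (by simpa using hij)
  have hρle : ∀ i j, i ≤ j → j < n → ρ i ≤ ρ j := by
    intro i j hij hj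
    rcases eq_or_lt_of_le hij with h | h
    · subst h; exact le_refl _
    · exact le_of_lt (hρmono i j h hj)
  -- product formula
  have hfact := C_leadingCoeff_mul_prod_multiset_X_sub_C (p := P) (hroots.1.trans hdeg.symm)
  have himg : P.roots.toFinset = Finset.image (fun i : Fin n => r i) Finset.univ := by
    ext x
    simp only [Finset.mem_image, Finset.mem_univ, true_and]
    constructor
    · intro hx
      have : x ∈ Set.range (P.roots.toFinset.orderEmbOfFin htf) := by
        rw [Finset.range_orderEmbOfFin]; exact hx
      obtain ⟨i, hi⟩ := this
      exact ⟨i, hi⟩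
    · rintro ⟨i, rfl⟩
      exact Multiset.mem_toFinset.mpr (hrmem i)
  have heval : ∀ t, P.eval t = c * ∏ i ∈ Finset.range n, (t - ρ i) := by
    intro t
    conv_lhs => rw [← hfact]
    rw [eval_mul, eval_C, eval_multiset_prod, Multiset.map_map]
    congr 1
    have h1 : (P.roots.map (fun a => eval t (X - C a))).prod
        = ∏ a ∈ P.roots.toFinset, (t - a) := by
      rw [Finset.prod]
      congr 1
      rw [Multiset.toFinset_val, hroots.2.dedup]
      simp [Multiset.map_map]
    rw [show (P.roots.map (eval t ∘ fun a => X - C a)).prod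
        = (P.roots.map (fun a => eval t (X - C a))).prod from rfl, h1, himg,
      Finset.prod_image (fun a _ b _ h => hrmono.injective h)]
    rw [← Fin.prod_univ_eq_prod_range (fun i => (t - ρ i)) n]
    apply Finset.prod_congr rfl
    intro i _
    simp only [hρ, dif_pos i.isLt, eval_sub, eval_X, eval_C]
  -- sign on gaps
  have hgap : ∀ j t, j ≤ n → (∀ i, i < j → ρ i < t) → (∀ i, j ≤ i → i < n → t < ρ i) →
      0 < (-1:ℝ)^(n-j) * c * P.eval t := by
    intro j t hjn hlo hhi
    have hsplit := Finset.prod_filter_mul_prod_filter_not (Finset.range n)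
      (fun i => i < j) (fun i => t - ρ i)
    have hA : 0 < ∏ i ∈ (Finset.range n).filter (fun i => i < j), (t - ρ i) := by
      apply Finset.prod_pos
      intro i hi
      simp only [Finset.mem_filter, Finset.mem_range] at hi
      exact sub_pos.mpr (hlo i hi.2)
    have hBcard : ((Finset.range n).filter (fun i => ¬ i < j)).card = n - j := by
      have : (Finset.range n).filter (fun i => ¬ i < j) = Finset.Ico j n := by
        ext i; simp only [Finset.mem_filter, Finset.mem_range, Finset.mem_Ico, not_lt]; omega
      rw [this, Nat.card_Ico]
    have hBeq : ∏ i ∈ (Finset.range n).filter (fun i => ¬ i < j), (t - ρ i)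
        = (-1:ℝ)^(n-j) * ∏ i ∈ (Finset.range n).filter (fun i => ¬ i < j), (ρ i - t) := by
      rw [← hBcard, ← Finset.prod_const, ← Finset.prod_mul_distrib]
      apply Finset.prod_congr rfl
      intro i _; ring
    have hB' : 0 < ∏ i ∈ (Finset.range n).filter (fun i => ¬ i < j), (ρ i - t) := by
      apply Finset.prod_pos
      intro i hi
      simp only [Finset.mem_filter, Finset.mem_range, not_lt] at hi
      exact sub_pos.mpr (hhi i hi.2 hi.1)
    have hsq : (-1:ℝ)^(n-j) * (-1:ℝ)^(n-j) = 1 := by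
      rw [← pow_add]
      exact Even.neg_one_pow ⟨n-j, rfl⟩
    have hEq : (-1:ℝ)^(n-j) * c * P.eval t
        = ((-1:ℝ)^(n-j) * (-1:ℝ)^(n-j)) * ((c * c) *
          ((∏ i ∈ (Finset.range n).filter (fun i => i < j), (t - ρ i)) *
           ∏ i ∈ (Finset.range n).filter (fun i => ¬ i < j), (ρ i - t))) := by
      rw [heval t, ← hsplit, hBeq]; ring
    rw [hEq, hsq, one_mul]
    exact mul_pos (mul_self_pos.mpr hc0) (mul_pos hA hB')
  -- Rolle points
  have hRolle : ∀ j : ℕ, ∃ y, 1 ≤ j → j ≤ n-1 →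
      (ρ (j-1) < y ∧ y < ρ j ∧ P.derivative.eval y = 0) := by
    intro j
    by_cases hj : 1 ≤ j ∧ j ≤ n - 1
    · obtain ⟨hj1, hj2⟩ := hj
      have hjn : j < n := by omega
      have hlt : ρ (j-1) < ρ j := hρmono (j-1) j (by omega) hjn
      have hcont : ContinuousOn (fun x => P.eval x) (Set.Icc (ρ (j-1)) (ρ j)) :=
        P.continuous.continuousOn
      have heq : P.eval (ρ (j-1)) = P.eval (ρ j) := by
        rw [hρroot _ (by omega), hρroot _ hjn]
      obtain ⟨y, hy, hy0⟩ := exists_deriv_eq_zero hlt hcont heq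
      refine ⟨y, fun _ _ => ⟨hy.1, hy.2, ?_⟩⟩
      rw [← Polynomial.deriv]; exact hy0
    · exact ⟨0, fun h1 h2 => absurd ⟨h1, h2⟩ hj⟩
  choose y hy using hRolle
  -- endpoints
  have hdegpos : 0 < P.degree := natDegree_pos_iff_degree_pos.mp (by omega)
  have hAex : ∃ A, A < ρ 0 ∧ 1 < |P.eval A| := by
    have h1 : Filter.Tendsto (fun x : ℝ => |P.eval x|) Filter.atBot Filter.atTop := by
      have hQ : Filter.Tendsto (fun x : ℝ => |(P.comp (-X)).eval x|) Filter.atTop Filter.atTop := by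
        apply Polynomial.abs_tendsto_atTop
        rw [← natDegree_pos_iff_degree_pos, natDegree_comp]
        simp [hdeg]; omega
      have := hQ.comp Filter.tendsto_neg_atBot_atTop
      refine this.congr (fun x => ?_)
      simp [Function.comp, eval_comp]
    have h2 : ∀ᶠ x : ℝ in Filter.atBot, 1 < |P.eval x| := h1.eventually_gt_atTop 1
    have h3 : ∀ᶠ x : ℝ in Filter.atBot, x < ρ 0 := Filter.eventually_lt_atBot (ρ 0)
    obtain ⟨A, hA1, hA2⟩ := (h3.and h2).exists
    exact ⟨A, hA1, hA2⟩
  have hBex : ∃ B, ρ (n-1) < B ∧ 1 < |P.eval B| := by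
    have h1 : Filter.Tendsto (fun x : ℝ => |P.eval x|) Filter.atTop Filter.atTop :=
      Polynomial.abs_tendsto_atTop P hdegpos
    have h2 : ∀ᶠ x : ℝ in Filter.atTop, 1 < |P.eval x| := h1.eventually_gt_atTop 1
    have h3 : ∀ᶠ x : ℝ in Filter.atTop, ρ (n-1) < x := Filter.eventually_gt_atTop (ρ (n-1))
    obtain ⟨B, hB1, hB2⟩ := (h3.and h2).exists
    exact ⟨B, hB1, hB2⟩
  obtain ⟨A, hA1, hA2⟩ := hAex
  obtain ⟨B, hB1, hB2⟩ := hBex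
  -- the points and signs
  set u : ℕ → ℝ := fun j => if j = 0 then A else if j ≤ n-1 then y j else B with hu
  set d : ℕ → ℝ := fun j => (-1:ℝ)^(n-j) * c with hd
  set R : ℝ[X] := P - C w with hR
  have hRdeg : R.natDegree = n := by rw [hR, natDegree_sub_C, hdeg]
  have hRne : R ≠ 0 := fun h => by rw [h] at hRdeg; simp at hRdeg; omega
  have hReval : ∀ t, R.eval t = P.eval t - w := by intro t; simp [hR]
  have hRder : R.derivative = P.derivative := by simp [hR]
  -- strict mono of u
  have humono : ∀ i j, i < j → j ≤ n → u i < u j := by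
    intro i j hij hjn
    have hyb : ∀ k, 1 ≤ k → k ≤ n-1 → ρ (k-1) < y k ∧ y k < ρ k := by
      intro k h1 h2; exact ⟨(hy k h1 h2).1, (hy k h1 h2).2.1⟩
    have hAρ : ∀ k, k < n → A < ρ k := fun k hk => lt_of_lt_of_le hA1 (hρle 0 k (by omega) hk)
    have hρB : ∀ k, k < n → ρ k < B := fun k hk => lt_of_le_of_lt (hρle k (n-1) (by omega) (by omega)) hB1
    simp only [hu]
    by_cases hi0 : i = 0
    · subst hi0
      rw [if_pos rfl]
      by_cases hjle : j ≤ n - 1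
      · rw [if_neg (by omega), if_pos hjle]
        exact lt_trans (hAρ (j-1) (by omega)) (hyb j (by omega) hjle).1
      · rw [if_neg (by omega), if_neg hjle]
        exact lt_trans (hAρ 0 (by omega)) (hρB 0 (by omega))
    · rw [if_neg hi0]
      by_cases hile : i ≤ n - 1
      · rw [if_pos hile]
        by_cases hjle : j ≤ n - 1
        · rw [if_neg (by omega), if_pos hjle]
          calc y i < ρ i := (hyb i (by omega) hile).2
          _ ≤ ρ (j-1) := hρle i (j-1) (by omega) (by omega)
          _ < y j := (hyb j (by omega) hjle).1
        · rw [if_neg (by omega), if_neg hjle]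
          exact lt_trans (hyb i (by omega) hile).2 (hρB i (by omega))
      · omega
  -- key facts at each u j
  have hfacts : ∀ j, j ≤ n → 0 < d j * P.eval (u j) ∧ 1 ≤ |P.eval (u j)| ∧
      (R.eval (u j) = 0 → R.derivative.eval (u j) = 0) := by
    intro j hjn
    by_cases hj0 : j = 0
    · subst hj0
      have huj : u 0 = A := by simp [hu]
      have hpos : 0 < d 0 * P.eval A := by
        have := hgap 0 A (by omega) (by omega) (fun i _ hi => lt_of_lt_of_le hA1 (hρle 0 i (by omega) hi))
        simpa [hd] using this
      refine ⟨by rw [huj]; exact hpos, by rw [huj]; exact le_of_lt hA2, ?_⟩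
      intro habs
      exfalso
      rw [huj, hReval] at habs
      have : |P.eval A| = |w| := by rw [show P.eval A = w by linarith]
      rw [this] at hA2
      have := abs_le.mpr (Set.mem_Icc.mp hw)
      linarith
    · by_cases hjle : j ≤ n - 1
      · have huj : u j = y j := by simp [hu, hj0, hjle]
        obtain ⟨hy1, hy2, hy3⟩ := hy j (by omega) hjle
        have hpos : 0 < d j * P.eval (y j) := by
          have := hgap j (y j) hjn
            (fun i hi => lt_of_le_of_lt (hρle i (j-1) (by omega) (by omega)) hy1)
            (fun i hi hin => lt_of_lt_of_le hy2 (hρle j i hi hin))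
          simpa [hd] using this
        refine ⟨by rw [huj]; exact hpos, by rw [huj]; exact hcrit _ hy3, ?_⟩
        intro _
        rw [hRder, huj]
        exact hy3
      · have hjeq : j = n := by omega
        have huj : u j = B := by simp only [hu]; rw [if_neg hj0, if_neg hjle]
        have hpos : 0 < d j * P.eval B := by
          have := hgap j B hjn
            (fun i hi => lt_of_le_of_lt (hρle i (n-1) (by omega) (by omega)) hB1)
            (fun i hi hin => absurd hin (by omega))
          simpa [hd] using this
        refine ⟨by rw [huj]; exact hpos, by rw [huj]; exact le_of_lt hB2, ?_⟩
        intro habs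
        exfalso
        rw [huj, hReval] at habs
        have : |P.eval B| = |w| := by rw [show P.eval B = w by linarith]
        rw [this] at hB2
        have := abs_le.mpr (Set.mem_Icc.mp hw)
        linarith
  -- apply the counting lemma
  have hd0 : ∀ j, j ≤ n → d j ≠ 0 := by
    intro j _
    simp only [hd]
    exact mul_ne_zero (pow_ne_zero _ (by norm_num)) hc0
  have habsd : ∀ j, |d j| = |c| := by
    intro j
    simp only [hd, abs_mul, abs_pow, abs_neg, abs_one, one_pow, one_mul]
  have hsign : ∀ j, j ≤ n → 0 ≤ d j * R.eval (u j) := by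
    intro j hjn
    obtain ⟨h1, h2, _⟩ := hfacts j hjn
    rw [hReval, mul_sub]
    have e1 : d j * w ≤ |d j| := by
      calc d j * w ≤ |d j * w| := le_abs_self _
      _ = |d j| * |w| := abs_mul _ _
      _ ≤ |d j| * 1 := by
          have := abs_le.mpr (Set.mem_Icc.mp hw)
          exact mul_le_mul_of_nonneg_left this (abs_nonneg _)
      _ = |d j| := mul_one _
    have e2 : |d j| ≤ d j * P.eval (u j) := by
      calc |d j| = |d j| * 1 := (mul_one _).symm
      _ ≤ |d j| * |P.eval (u j)| := mul_le_mul_of_nonneg_left h2 (abs_nonneg _)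
      _ = |d j * P.eval (u j)| := (abs_mul _ _).symm
      _ = d j * P.eval (u j) := abs_of_pos h1
    linarith
  have halt : ∀ j, j < n → d (j+1) = - d j := by
    intro j hj
    simp only [hd]
    have : n - j = (n - (j+1)) + 1 := by omega
    rw [this, pow_succ]
    ring
  have hder : ∀ j, j ≤ n → R.eval (u j) = 0 → R.derivative.eval (u j) = 0 :=
    fun j hj => (hfacts j hj).2.2
  have hcount : n ≤ Multiset.card R.roots :=
    aux_count R hRne n u d humono hd0 halt hsign hder
  -- complex contradiction
  set Rc : ℂ[X] := R.map (algebraMap ℝ ℂ) with hRc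
  have hinj : Function.Injective (algebraMap ℝ ℂ) := (algebraMap ℝ ℂ).injective
  have hRc0 : Rc ≠ 0 := by
    rw [hRc, Ne, Polynomial.map_eq_zero_iff hinj]
    exact hRne
  have hRcdeg : Rc.natDegree = n := by
    rw [hRc, natDegree_map_eq_of_injective hinj, hRdeg]
  have hwz' : (w : ℂ) = aeval z P := hwz
  have haeval : aeval z R = 0 := by
    rw [hR, map_sub, aeval_C]
    rw [← hwz']
    simp
  have haeval' : aeval ((starRingEnd ℂ) z) R = 0 := by
    rw [Polynomial.aeval_conj, haeval, map_zero]
  have hzroot : Rc.eval z = 0 := by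
    rw [hRc, eval_map, ← aeval_def]; exact haeval
  have hzroot' : Rc.eval ((starRingEnd ℂ) z) = 0 := by
    rw [hRc, eval_map, ← aeval_def]; exact haeval'
  set z' : ℂ := (starRingEnd ℂ) z with hz'
  have hzz' : z ≠ z' := by
    intro h
    exact him (Complex.conj_eq_iff_im.mp h.symm)
  set S : Multiset ℂ := R.roots.map (fun x : ℝ => (x : ℂ)) with hS
  have hSle : S ≤ Rc.roots := by
    have := Polynomial.map_roots_le (p := R) (f := algebraMap ℝ ℂ) (by rw [← hRc]; exact hRc0)
    rw [← hRc] at this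
    convert this using 2
    simp
  have hznS : z ∉ S := by
    intro hmem
    obtain ⟨x, _, hx⟩ := Multiset.mem_map.mp hmem
    exact him (by rw [← hx]; simp)
  have hz'nS : z' ∉ S := by
    intro hmem
    obtain ⟨x, _, hx⟩ := Multiset.mem_map.mp hmem
    apply him
    have : z'.im = 0 := by rw [← hx]; simp
    simp only [hz', Complex.conj_im] at this
    linarith
  have hzmem : z ∈ Rc.roots := (mem_roots hRc0).mpr hzroot
  have hz'mem : z' ∈ Rc.roots := (mem_roots hRc0).mpr hzroot'
  have hle : z ::ₘ z' ::ₘ S ≤ Rc.roots := by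
    rw [Multiset.le_iff_count]
    intro a
    by_cases ha : a = z
    · subst ha
      rw [Multiset.count_cons_self, Multiset.count_cons_of_ne hzz',
        Multiset.count_eq_zero_of_notMem hznS]
      exact Multiset.one_le_count_iff_mem.mpr hzmem
    · rw [Multiset.count_cons_of_ne ha]
      by_cases ha' : a = z'
      · subst ha'
        rw [Multiset.count_cons_self, Multiset.count_eq_zero_of_notMem hz'nS]
        exact Multiset.one_le_count_iff_mem.mpr hz'mem
      · rw [Multiset.count_cons_of_ne ha']
        exact Multiset.le_iff_count.mp hSle a
  have hcard1 : Multiset.card (z ::ₘ z' ::ₘ S) ≤ Multiset.card Rc.roots :=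
    Multiset.card_le_card hle
  have hcard2 : Multiset.card Rc.roots ≤ n := hRcdeg ▸ Rc.card_roots'
  have hcard3 : Multiset.card S = Multiset.card R.roots := Multiset.card_map _ _
  simp only [Multiset.card_cons] at hcard1
  omega
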